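/- The periodic BVP integral operator is a κ-contraction on comparable pairs: with (Fu)(t) = ∫₀ˢ G(t, z)[f(z, u(z)) + a·u(z)] dz on C[0,S], if f satisfies 0 ≤ (f(t, r₂) + a·r₂) − (f(t, r₁) + a·r₁) ≤ b(r₂ − r₁) for r₁ ≤ r₂, then F is order-preserving for the pointwise order, and ρ(Fv, Fu, r) ≤ (b/a)·ρ(v, u, r) for all u ⪯ v and all r > 0, where ρ(f, g, r) = sup_{[0,S]}|f − g| / r. -/

import Mathlib

open Set MeasureTheory intervalIntegral

/-- The kernel of the periodic BVP integral operator. -/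
private noncomputable def Kker (S a t z : ℝ) : ℝ :=
  (if z < t then Real.exp (a * (S + z - t)) else Real.exp (a * (z - t))) /
    (Real.exp (a * S) - 1)

private lemma expSa_pos (S a : ℝ) (hS : 0 < S) (ha : 0 < a) :
    0 < Real.exp (a * S) - 1 := by
  have : (1 : ℝ) < Real.exp (a * S) := Real.one_lt_exp_iff.2 (by positivity)
  linarith

private lemma Kker_nonneg (S a t z : ℝ) (hS : 0 < S) (ha : 0 < a) :
    0 ≤ Kker S a t z := by
  apply div_nonneg _ (expSa_pos S a hS ha).le
  split <;> exact (Real.exp_pos _).le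

private lemma ae_ne (t : ℝ) (μ : Measure ℝ) [NullSingletonClass μ] : ∀ᵐ z ∂μ, z ≠ t := by
  rw [MeasureTheory.ae_iff]
  simp

private lemma Kker_int_left (S a t : ℝ) (ht : t ∈ Icc (0 : ℝ) S) :
    IntervalIntegrable (Kker S a t) volume 0 t := by
  refine (Continuous.intervalIntegrable (by fun_prop) 0 t).congr_ae
    (f := fun z => Real.exp (a * (S + z - t)) / (Real.exp (a * S) - 1)) ?_
  filter_upwards [ae_restrict_mem measurableSet_uIoc,
    ae_restrict_of_ae (μ := volume) (ae_ne t _)] with z hz hzt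
  have hz2 : z ≤ t := by
    have := hz.2
    rwa [max_eq_right ht.1] at this
  have : z < t := lt_of_le_of_ne hz2 hzt
  simp [Kker, this]

private lemma Kker_int_right (S a t : ℝ) (ht : t ∈ Icc (0 : ℝ) S) :
    IntervalIntegrable (Kker S a t) volume t S := by
  refine (Continuous.intervalIntegrable (by fun_prop) t S).congr_ae
    (f := fun z => Real.exp (a * (z - t)) / (Real.exp (a * S) - 1)) ?_
  filter_upwards [ae_restrict_mem measurableSet_uIoc] with z hz
  have hz2 : t < z := by
    have := hz.1
    rwa [min_eq_left ht.2] at this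
  simp [Kker, not_lt.2 hz2.le]

private lemma Kker_integrable (S a t : ℝ) (ht : t ∈ Icc (0 : ℝ) S) :
    IntervalIntegrable (Kker S a t) volume 0 S :=
  (Kker_int_left S a t ht).trans (Kker_int_right S a t ht)

private lemma exp_lin_integral (a d x y : ℝ) (ha : a ≠ 0) :
    ∫ z in x..y, Real.exp (a * z + d) =
      (Real.exp (a * y + d) - Real.exp (a * x + d)) / a := by
  have h : ∀ z : ℝ, HasDerivAt (fun z => Real.exp (a * z + d) / a)
      (Real.exp (a * z + d)) z := by
    intro z
    have h1 : HasDerivAt (fun z : ℝ => a * z + d) a z := by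
      simpa using ((hasDerivAt_id z).const_mul a).add_const d
    have h2 := h1.exp.div_const a
    simpa [mul_div_assoc, mul_div_cancel_right₀, ha] using h2
  rw [intervalIntegral.integral_eq_sub_of_hasDerivAt (fun z _ => h z)
    ((Real.continuous_exp.comp (by fun_prop)).intervalIntegrable x y)]
  ring

private lemma Kker_integral (S a t : ℝ) (hS : 0 < S) (ha : 0 < a)
    (ht : t ∈ Icc (0 : ℝ) S) :
    ∫ z in (0 : ℝ)..S, Kker S a t z = 1 / a := by
  have hc := expSa_pos S a hS ha
  have hsplit : ∫ z in (0 : ℝ)..S, Kker S a t z =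
      (∫ z in (0 : ℝ)..t, Kker S a t z) + ∫ z in t..S, Kker S a t z :=
    (intervalIntegral.integral_add_adjacent_intervals (Kker_int_left S a t ht)
      (Kker_int_right S a t ht)).symm
  have h1 : ∫ z in (0 : ℝ)..t, Kker S a t z =
      (Real.exp (a * S) - Real.exp (a * (S - t))) / a / (Real.exp (a * S) - 1) := by
    have hcong : ∫ z in (0 : ℝ)..t, Kker S a t z =
        ∫ z in (0 : ℝ)..t, Real.exp (a * z + a * (S - t)) / (Real.exp (a * S) - 1) := by
      apply intervalIntegral.integral_congr_ae
      filter_upwards [ae_ne t volume] with z hzt hz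
      rw [uIoc_of_le ht.1] at hz
      have hlt : z < t := lt_of_le_of_ne hz.2 hzt
      simp only [Kker, if_pos hlt]
      ring_nf
    rw [hcong, intervalIntegral.integral_div, exp_lin_integral a _ 0 t ha.ne']
    have e1 : a * t + a * (S - t) = a * S := by ring
    have e2 : a * 0 + a * (S - t) = a * (S - t) := by ring
    rw [e1, e2]
  have h2 : ∫ z in t..S, Kker S a t z =
      (Real.exp (a * (S - t)) - 1) / a / (Real.exp (a * S) - 1) := by
    have hcong : ∫ z in t..S, Kker S a t z =
        ∫ z in t..S, Real.exp (a * z + -(a * t)) / (Real.exp (a * S) - 1) := by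
      apply intervalIntegral.integral_congr
      intro z hz
      rw [uIcc_of_le ht.2] at hz
      by_cases hlt : z < t
      · exact absurd hz.1 (not_le.2 hlt)
      · simp only [Kker, if_neg hlt]
        ring_nf
    rw [hcong, intervalIntegral.integral_div, exp_lin_integral a _ t S ha.ne']
    have e1 : a * S + -(a * t) = a * (S - t) := by ring
    have e2 : a * t + -(a * t) = 0 := by ring
    rw [e1, e2, Real.exp_zero]
  rw [hsplit, h1, h2]
  field_simp
  ring

/-- The periodic BVP integral operator is order-preserving and a (b/a)-contraction on
comparable pairs, for ρ(f,g,r) = sup_{[0,S]}|f − g| / r. -/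
theorem periodic_bvp_operator_contraction
    (S a b : ℝ) (hS : 0 < S) (hb : 0 < b) (hba : b < a)
    (f : ℝ → ℝ → ℝ) (hf : Continuous fun p : ℝ × ℝ => f p.1 p.2)
    (hcond : ∀ t ∈ Icc (0 : ℝ) S, ∀ r₁ r₂ : ℝ, r₁ ≤ r₂ →
      0 ≤ (f t r₂ + a * r₂) - (f t r₁ + a * r₁) ∧
        (f t r₂ + a * r₂) - (f t r₁ + a * r₁) ≤ b * (r₂ - r₁))
    (F : (ℝ → ℝ) → (ℝ → ℝ))
    (hF : ∀ u : ℝ → ℝ, ∀ t : ℝ, F u t =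
      ∫ z in (0 : ℝ)..S,
        ((if z < t then Real.exp (a * (S + z - t)) else Real.exp (a * (z - t))) /
          (Real.exp (a * S) - 1)) * (f z (u z) + a * u z)) :
    ∀ u v : ℝ → ℝ, Continuous u → Continuous v →
      (∀ t ∈ Icc (0 : ℝ) S, u t ≤ v t) →
      (∀ t ∈ Icc (0 : ℝ) S, F u t ≤ F v t) ∧
      (∀ r : ℝ, 0 < r →
        (⨆ t : Icc (0 : ℝ) S, |F v t - F u t|) / r ≤
          (b / a) * ((⨆ t : Icc (0 : ℝ) S, |v t - u t|) / r)) := by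
  intro u v hu hv huv
  have ha : 0 < a := hb.trans hba
  have hF' : ∀ w : ℝ → ℝ, ∀ t : ℝ, F w t =
      ∫ z in (0 : ℝ)..S, Kker S a t z * (f z (w z) + a * w z) := fun w t => hF w t
  have hgu : Continuous fun z => f z (u z) + a * u z :=
    (hf.comp (continuous_id.prodMk hu)).add (continuous_const.mul hu)
  have hgv : Continuous fun z => f z (v z) + a * v z :=
    (hf.comp (continuous_id.prodMk hv)).add (continuous_const.mul hv)
  have hintu : ∀ t ∈ Icc (0 : ℝ) S,
      IntervalIntegrable (fun z => Kker S a t z * (f z (u z) + a * u z)) volume 0 S :=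
    fun t ht => (Kker_integrable S a t ht).mul_continuousOn hgu.continuousOn
  have hintv : ∀ t ∈ Icc (0 : ℝ) S,
      IntervalIntegrable (fun z => Kker S a t z * (f z (v z) + a * v z)) volume 0 S :=
    fun t ht => (Kker_integrable S a t ht).mul_continuousOn hgv.continuousOn
  -- the difference as a single integral
  have hdiff : ∀ t ∈ Icc (0 : ℝ) S, F v t - F u t =
      ∫ z in (0 : ℝ)..S, Kker S a t z *
        ((f z (v z) + a * v z) - (f z (u z) + a * u z)) := by
    intro t ht
    rw [hF' v t, hF' u t, ← intervalIntegral.integral_sub (hintv t ht) (hintu t ht)]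
    apply intervalIntegral.integral_congr
    intro z _
    ring
  -- monotonicity
  have hmono : ∀ t ∈ Icc (0 : ℝ) S, F u t ≤ F v t := by
    intro t ht
    have h0 : 0 ≤ F v t - F u t := by
      rw [hdiff t ht]
      apply intervalIntegral.integral_nonneg hS.le
      intro z hz
      exact mul_nonneg (Kker_nonneg S a t z hS ha)
        (hcond z hz (u z) (v z) (huv z hz)).1
    linarith
  refine ⟨hmono, ?_⟩
  -- supremum bound
  set M := ⨆ t : Icc (0 : ℝ) S, |v t - u t| with hM
  haveI : Nonempty (Icc (0 : ℝ) S) := ⟨⟨0, le_refl 0, hS.le⟩⟩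
  have hbdd : BddAbove (Set.range fun t : Icc (0 : ℝ) S => |v t.1 - u t.1|) := by
    have hcont : ContinuousOn (fun x => |v x - u x|) (Icc (0 : ℝ) S) :=
      ((hv.sub hu).abs).continuousOn
    have h := (isCompact_Icc.image_of_continuousOn hcont).bddAbove
    rwa [Set.image_eq_range] at h
  have hMle : ∀ z ∈ Icc (0 : ℝ) S, v z - u z ≤ M := by
    intro z hz
    have := le_ciSup hbdd (⟨z, hz⟩ : Icc (0 : ℝ) S)
    exact le_trans (le_abs_self _) this
  have key : ∀ t ∈ Icc (0 : ℝ) S, |F v t - F u t| ≤ b * M / a := by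
    intro t ht
    have h0 : 0 ≤ F v t - F u t := by linarith [hmono t ht]
    rw [abs_of_nonneg h0, hdiff t ht]
    have hle : ∫ z in (0 : ℝ)..S, Kker S a t z *
        ((f z (v z) + a * v z) - (f z (u z) + a * u z)) ≤
        ∫ z in (0 : ℝ)..S, Kker S a t z * (b * M) := by
      apply intervalIntegral.integral_mono_on hS.le
      · have : IntervalIntegrable (fun z => Kker S a t z *
            ((f z (v z) + a * v z) - (f z (u z) + a * u z))) volume 0 S :=
          (Kker_integrable S a t ht).mul_continuousOn (hgv.sub hgu).continuousOn
        exact this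
      · exact (Kker_integrable S a t ht).mul_const _
      · intro z hz
        apply mul_le_mul_of_nonneg_left _ (Kker_nonneg S a t z hS ha)
        calc (f z (v z) + a * v z) - (f z (u z) + a * u z)
            ≤ b * (v z - u z) := (hcond z hz (u z) (v z) (huv z hz)).2
          _ ≤ b * M := by
              apply mul_le_mul_of_nonneg_left (hMle z hz) hb.le
    calc _ ≤ ∫ z in (0 : ℝ)..S, Kker S a t z * (b * M) := hle
      _ = (∫ z in (0 : ℝ)..S, Kker S a t z) * (b * M) :=
          intervalIntegral.integral_mul_const _ _
      _ = (1 / a) * (b * M) := by rw [Kker_integral S a t hS ha ht]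
      _ = b * M / a := by ring
  intro r hr
  have hsup : (⨆ t : Icc (0 : ℝ) S, |F v t - F u t|) ≤ b * M / a := by
    apply ciSup_le
    intro t
    exact key t.1 t.2
  calc (⨆ t : Icc (0 : ℝ) S, |F v t - F u t|) / r ≤ (b * M / a) / r := by
        gcongr
    _ = (b / a) * (M / r) := by ring
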